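/- Let m ≥ 1, let u ∈ M_m(ℂ), and let z₀ ∈ M_m(ℝ) be a diagonal matrix with strictly positive diagonal entries. There exists a polynomial P ∈ ℂ[X] (depending on u and z₀) of degree at most m such that for every s ∈ ℂ, Δ|_{z=z₀}( e^{tr(uz)} · det(z)^s ) = e^{tr(u z₀)} · det(z₀)^s · P(s), where det(z)^s := exp(s · Log(det z)) with Log the principal complex logarithm (well defined and holomorphic on a neighborhood of z₀, since det z₀ > 0). -/

import Mathlib

open Matrix

/-- Partial derivative `∂/∂z_{j,k}` acting on functions of `m × m` complex matrices
(viewed as functions of the `m²` entries). -/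
noncomputable def matPartial {m : ℕ} (j k : Fin m)
    (f : (Fin m → Fin m → ℂ) → ℂ) : (Fin m → Fin m → ℂ) → ℂ :=
  fun z => fderiv ℂ f z (Matrix.of.symm (Matrix.single j k (1 : ℂ)))

/-- Shimura's differential operator `Δ = det(∂/∂z_{j,k})
  = ∑_{σ ∈ S_m} sgn(σ) ∂^m/(∂z_{1,σ(1)} ⋯ ∂z_{m,σ(m)})`,
applied to `f` at the point `z₀`. -/
noncomputable def matDelta {m : ℕ} (f : Matrix (Fin m) (Fin m) ℂ → ℂ)
    (z₀ : Matrix (Fin m) (Fin m) ℂ) : ℂ :=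
  ∑ σ : Equiv.Perm (Fin m),
    ((Equiv.Perm.sign σ : ℤ) : ℂ) *
      (((List.ofFn fun j : Fin m => matPartial j (σ j)).foldr (· ∘ ·) id)
        (fun z => f (Matrix.of z))) (Matrix.of.symm z₀)

namespace Stmt2Aux

variable {m : ℕ}

noncomputable def Fn (u : Matrix (Fin m) (Fin m) ℂ) (s : ℂ) (z : Fin m → Fin m → ℂ) : ℂ :=
  Complex.exp (Matrix.trace (u * Matrix.of z)) * Complex.exp (s * Complex.log (Matrix.of z).det)

def U (m : ℕ) : Set (Fin m → Fin m → ℂ) := {z | (Matrix.of z).det ∈ Complex.slitPlane}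

noncomputable def detf (m : ℕ) : (Fin m → Fin m → ℂ) → ℂ := fun z => (Matrix.of z).det

lemma contDiff_coord (a b : Fin m) : ContDiff ℂ ⊤ (fun z : Fin m → Fin m → ℂ => z a b) :=
  ((ContinuousLinearMap.proj (R := ℂ) (φ := fun _ : Fin m => ℂ) b).comp
    (ContinuousLinearMap.proj (R := ℂ) (φ := fun _ : Fin m => Fin m → ℂ) a)).contDiff

lemma contDiff_detf : ContDiff ℂ ⊤ (detf m) := by
  have h : detf m = fun z : Fin m → Fin m → ℂ =>
      ∑ σ : Equiv.Perm (Fin m), ((Equiv.Perm.sign σ : ℤ) : ℂ) * ∏ i, z (σ i) i := by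
    funext z
    rw [detf, Matrix.det_apply]
    simp [Matrix.of_apply, Units.smul_def, zsmul_eq_mul]
  rw [h]
  exact ContDiff.sum fun σ _ =>
    (contDiff_const.mul (contDiff_prod fun i _ => contDiff_coord (σ i) i))

lemma isOpen_U : IsOpen (U m) :=
  Complex.isOpen_slitPlane.preimage contDiff_detf.continuous

noncomputable def traceCLM (u : Matrix (Fin m) (Fin m) ℂ) : (Fin m → Fin m → ℂ) →L[ℂ] ℂ :=
  LinearMap.toContinuousLinearMap
    { toFun := fun z => Matrix.trace (u * Matrix.of z)
      map_add' := fun x y => by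
        show Matrix.trace (u * (Matrix.of x + Matrix.of y)) = _
        rw [Matrix.mul_add, Matrix.trace_add]
      map_smul' := fun c x => by
        show Matrix.trace (u * (c • Matrix.of x)) = _
        rw [Matrix.mul_smul, Matrix.trace_smul]; rfl }

lemma traceCLM_apply (u : Matrix (Fin m) (Fin m) ℂ) (z : Fin m → Fin m → ℂ) :
    traceCLM u z = Matrix.trace (u * Matrix.of z) := rfl


lemma hasFDerivAt_Fn (u : Matrix (Fin m) (Fin m) ℂ) (s : ℂ) {z : Fin m → Fin m → ℂ}
    (hz : z ∈ U m) :
    HasFDerivAt (Fn u s)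
      (Fn u s z • (traceCLM u + s • ((detf m z)⁻¹ • fderiv ℂ (detf m) z))) z := by
  have hT : HasFDerivAt (fun w => Complex.exp (traceCLM u w))
      (Complex.exp (traceCLM u z) • traceCLM u) z :=
    (traceCLM u).hasFDerivAt.cexp
  have hdet : HasFDerivAt (detf m) (fderiv ℂ (detf m) z) z :=
    (contDiff_detf.differentiable (by simp) z).hasFDerivAt
  have hlog : HasFDerivAt (fun w => Complex.log (detf m w))
      ((detf m z)⁻¹ • fderiv ℂ (detf m) z) z := hdet.clog hz
  have hL : HasFDerivAt (fun w => Complex.exp (s * Complex.log (detf m w)))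
      (Complex.exp (s * Complex.log (detf m z)) • (s • ((detf m z)⁻¹ • fderiv ℂ (detf m) z))) z :=
    (hlog.const_mul s).cexp
  refine (hT.mul hL).congr_fderiv ?_
  ext w
  simp only [ContinuousLinearMap.smul_apply, ContinuousLinearMap.add_apply, Fn,
    traceCLM_apply, detf, smul_eq_mul]
  ring


def Good (u : Matrix (Fin m) (Fin m) ℂ) (n : ℕ) (h : ℂ → (Fin m → Fin m → ℂ) → ℂ) : Prop :=
  ∃ c : ℕ → (Fin m → Fin m → ℂ) → ℂ,
    (∀ k, ContDiffOn ℂ ⊤ (c k) (U m)) ∧ (∀ k, n < k → c k = 0) ∧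
    ∀ s : ℂ, ∀ z ∈ U m, h s z = Fn u s z * ∑ k ∈ Finset.range (n + 1), c k z * s ^ k

lemma good_base (u : Matrix (Fin m) (Fin m) ℂ) : Good u 0 (Fn u) := by
  refine ⟨fun k => if k = 0 then (fun _ => 1) else 0, ?_, ?_, ?_⟩
  · intro k; dsimp only; split
    · exact contDiffOn_const
    · exact contDiffOn_const
  · intro k hk; dsimp only; rw [if_neg (by omega)]
  · intro s z _; simp

lemma Good.step {u : Matrix (Fin m) (Fin m) ℂ} {n : ℕ} {h : ℂ → (Fin m → Fin m → ℂ) → ℂ}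
    (hg : Good u n h) (a b : Fin m) :
    Good u (n + 1) (fun s => matPartial a b (h s)) := by
  obtain ⟨c, hsm, hzero, heq⟩ := hg
  set E : Fin m → Fin m → ℂ := Matrix.of.symm (Matrix.single a b 1) with hE
  set β : (Fin m → Fin m → ℂ) → ℂ := fun z => (detf m z)⁻¹ * fderiv ℂ (detf m) z E with hβ
  refine ⟨fun k z => fderiv ℂ (c k) z E + traceCLM u E * c k z
    + β z * (if k = 0 then 0 else c (k - 1) z), ?_, ?_, ?_⟩
  · intro k
    have h1 : ContDiffOn ℂ ⊤ (fun z => fderiv ℂ (c k) z E) (U m) :=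
      ((hsm k).fderiv_of_isOpen isOpen_U le_top).clm_apply contDiffOn_const
    have hβs : ContDiffOn ℂ ⊤ β (U m) := by
      refine (contDiff_detf.contDiffOn.inv fun z hz => Complex.slitPlane_ne_zero hz).mul ?_
      exact ((contDiff_detf.fderiv_right le_top).clm_apply contDiff_const).contDiffOn
    refine (h1.add (contDiffOn_const.mul (hsm k))).add (hβs.mul ?_)
    split
    · exact contDiffOn_const
    · exact hsm (k - 1)
  · intro k hk
    have h1 : c k = 0 := hzero k (by omega)
    have h2 : (if k = 0 then (0:ℂ) else c (k-1) ·) = fun _ => 0 := by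
      have hk0 : ¬ (k = 0) := by omega
      funext z; simp only [hk0, if_false]
      rw [hzero (k-1) (by omega)]; rfl
    funext z
    simp only [h1, Pi.zero_apply, Pi.zero_def]
    have hk0 : ¬ (k = 0) := by omega
    rw [hzero (k-1) (by omega)]
    simp [fderiv_const, hk0]
  · intro s z hz
    -- the function h s agrees near z with Fn u s * (polynomial in s)
    have hmem := isOpen_U.mem_nhds hz
    have hev : h s =ᶠ[nhds z] fun w => Fn u s w * ∑ k ∈ Finset.range (n + 1), c k w * s ^ k := by
      filter_upwards [hmem] with w hw using heq s w hw
    -- derivatives of the coefficients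
    have hcd : ∀ k, HasFDerivAt (c k) (fderiv ℂ (c k) z) z := fun k =>
      (((hsm k).differentiableOn (by simp)).differentiableAt hmem).hasFDerivAt
    have hcs : HasFDerivAt (fun w => ∑ k ∈ Finset.range (n + 1), c k w * s ^ k)
        (∑ k ∈ Finset.range (n + 1), s ^ k • fderiv ℂ (c k) z) z :=
      HasFDerivAt.fun_sum fun k _ => (hcd k).mul_const (s ^ k)
    have hprod := (hasFDerivAt_Fn u s hz).fun_mul hcs
    have hfd : fderiv ℂ (h s) z = fderiv ℂ
        (fun w => Fn u s w * ∑ k ∈ Finset.range (n + 1), c k w * s ^ k) z :=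
      Filter.EventuallyEq.fderiv_eq hev
    have key : matPartial a b (h s) z
        = Fn u s z * ((∑ k ∈ Finset.range (n + 1), s ^ k * fderiv ℂ (c k) z E)
            + (traceCLM u E + s * β z) * ∑ k ∈ Finset.range (n + 1), c k z * s ^ k) := by
      rw [matPartial, ← hE, hfd, hprod.fderiv]
      simp only [ContinuousLinearMap.add_apply, ContinuousLinearMap.smul_apply,
        ContinuousLinearMap.sum_apply, smul_eq_mul, hβ]
      ring
    dsimp only
    rw [key]
    congr 1
    -- algebraic rearrangement of the sums
    have e1 : ∑ k ∈ Finset.range (n + 1 + 1),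
        (fderiv ℂ (c k) z E + traceCLM u E * c k z + β z * (if k = 0 then 0 else c (k-1) z)) * s ^ k
        = (∑ k ∈ Finset.range (n + 1 + 1), fderiv ℂ (c k) z E * s ^ k)
          + (∑ k ∈ Finset.range (n + 1 + 1), traceCLM u E * c k z * s ^ k)
          + ∑ k ∈ Finset.range (n + 1 + 1), β z * (if k = 0 then 0 else c (k-1) z) * s ^ k := by
      rw [← Finset.sum_add_distrib, ← Finset.sum_add_distrib]
      exact Finset.sum_congr rfl fun k _ => by ring
    rw [e1]
    have hcz : c (n + 1) = 0 := hzero (n+1) (by omega)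
    have e2 : ∑ k ∈ Finset.range (n + 1 + 1), fderiv ℂ (c k) z E * s ^ k
        = ∑ k ∈ Finset.range (n + 1), fderiv ℂ (c k) z E * s ^ k := by
      rw [Finset.sum_range_succ, hcz,
        show fderiv ℂ (0 : (Fin m → Fin m → ℂ) → ℂ) z = 0 from fderiv_const_apply 0]
      simp
    have e3 : ∑ k ∈ Finset.range (n + 1 + 1), traceCLM u E * c k z * s ^ k
        = traceCLM u E * ∑ k ∈ Finset.range (n + 1), c k z * s ^ k := by
      rw [Finset.sum_range_succ, hcz, Finset.mul_sum]
      simp [mul_assoc]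
    have e4 : ∑ k ∈ Finset.range (n + 1 + 1), β z * (if k = 0 then 0 else c (k-1) z) * s ^ k
        = s * β z * ∑ k ∈ Finset.range (n + 1), c k z * s ^ k := by
      rw [Finset.sum_range_succ']
      have h0 : (β z * if 0 = 0 then 0 else c (0 - 1) z) * s ^ 0 = 0 := by simp
      rw [h0, add_zero, Finset.mul_sum]
      refine Finset.sum_congr rfl fun k _ => ?_
      simp only [Nat.add_sub_cancel, if_neg (Nat.succ_ne_zero k)]
      ring
    rw [e2, e3, e4]
    have e5 : ∑ k ∈ Finset.range (n + 1), s ^ k * fderiv ℂ (c k) z E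
        = ∑ k ∈ Finset.range (n + 1), fderiv ℂ (c k) z E * s ^ k :=
      Finset.sum_congr rfl fun k _ => mul_comm _ _
    rw [e5]
    ring


lemma good_fold (u : Matrix (Fin m) (Fin m) ℂ) (L : List (Fin m × Fin m))
    {n : ℕ} {h : ℂ → (Fin m → Fin m → ℂ) → ℂ} (hg : Good u n h) :
    Good u (L.length + n)
      (fun s => ((L.map fun p => matPartial p.1 p.2).foldr (· ∘ ·) id) (h s)) := by
  induction L generalizing n h with
  | nil => simpa using hg
  | cons p L ih =>
      have h2 := (ih hg).step p.1 p.2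
      have harith : L.length + n + 1 = (p :: L).length + n := by simp; omega
      rw [harith] at h2
      convert h2 using 2
      rfl

end Stmt2Aux

/-- For `u ∈ M_m(ℂ)` and `z₀ = diag(d₁, …, d_m)` real diagonal with
positive entries, there is a polynomial `P ∈ ℂ[X]` of degree at most `m` such that for
every `s ∈ ℂ`, `Δ|_{z=z₀}(e^{tr(uz)} det(z)^s) = e^{tr(u z₀)} det(z₀)^s · P(s)`, where
`det(z)^s := exp(s · Log(det z))` with `Log` the principal complex logarithm. -/
theorem stmt2 {m : ℕ} (hm : 1 ≤ m) (u : Matrix (Fin m) (Fin m) ℂ)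
    (d : Fin m → ℝ) (hd : ∀ i, 0 < d i) :
    ∃ P : Polynomial ℂ, P.degree ≤ m ∧ ∀ s : ℂ,
      matDelta
          (fun z => Complex.exp (Matrix.trace (u * z)) * Complex.exp (s * Complex.log z.det))
          (Matrix.diagonal fun i => (d i : ℂ)) =
        Complex.exp (Matrix.trace (u * Matrix.diagonal fun i => (d i : ℂ))) *
          Complex.exp (s * Complex.log (Matrix.diagonal fun i => (d i : ℂ)).det) *
          P.eval s := by
  classical
  set z₀ : Fin m → Fin m → ℂ := Matrix.of.symm (Matrix.diagonal fun i => (d i : ℂ)) with hz₀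
  have hz₀U : z₀ ∈ Stmt2Aux.U m := by
    show (Matrix.of z₀).det ∈ Complex.slitPlane
    have hdet : (Matrix.of z₀).det = ((∏ i, d i : ℝ) : ℂ) := by
      show (Matrix.diagonal fun i => (d i : ℂ)).det = _
      rw [Matrix.det_diagonal]
      push_cast
      rfl
    rw [hdet]
    refine Or.inl ?_
    rw [Complex.ofReal_re]
    exact Finset.prod_pos fun i _ => hd i
  have key : ∀ σ : Equiv.Perm (Fin m), ∃ Q : Polynomial ℂ, Q.degree ≤ m ∧ ∀ s : ℂ,
      (((List.ofFn fun j : Fin m => matPartial j (σ j)).foldr (· ∘ ·) id)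
        (Stmt2Aux.Fn u s)) z₀ = Stmt2Aux.Fn u s z₀ * Q.eval s := by
    intro σ
    have hg := Stmt2Aux.good_fold u (List.ofFn fun j => (j, σ j)) (Stmt2Aux.good_base u)
    rw [List.map_ofFn] at hg
    simp only [List.length_ofFn, Nat.add_zero, Function.comp] at hg
    obtain ⟨c, hsm, hz, heq⟩ := hg
    refine ⟨∑ k ∈ Finset.range (m + 1), Polynomial.C (c k z₀) * Polynomial.X ^ k, ?_, ?_⟩
    · refine (Polynomial.degree_sum_le _ _).trans (Finset.sup_le fun k hk => ?_)
      refine (Polynomial.degree_C_mul_X_pow_le _ _).trans ?_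
      exact_mod_cast Nat.cast_le.mpr (by simpa using Nat.lt_succ_iff.mp (Finset.mem_range.mp hk))
    · intro s
      have h1 := heq s z₀ hz₀U
      simpa [Polynomial.eval_finset_sum, Function.comp_def] using h1
  choose Q hdeg hval using key
  refine ⟨∑ σ : Equiv.Perm (Fin m), Polynomial.C ((Equiv.Perm.sign σ : ℤ) : ℂ) * Q σ, ?_, ?_⟩
  · refine (Polynomial.degree_sum_le _ _).trans (Finset.sup_le fun σ _ => ?_)
    refine (Polynomial.degree_mul_le _ _).trans ?_
    exact (add_le_add Polynomial.degree_C_le (hdeg σ)).trans (by simp)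
  · intro s
    rw [matDelta]
    have hsum : ∀ σ : Equiv.Perm (Fin m),
        (((List.ofFn fun j : Fin m => matPartial j (σ j)).foldr (· ∘ ·) id)
          (fun z => Complex.exp (Matrix.trace (u * Matrix.of z)) *
            Complex.exp (s * Complex.log (Matrix.of z).det))) z₀
        = Stmt2Aux.Fn u s z₀ * (Q σ).eval s := fun σ => hval σ s
    calc (∑ σ : Equiv.Perm (Fin m), ((Equiv.Perm.sign σ : ℤ) : ℂ) *
          (((List.ofFn fun j : Fin m => matPartial j (σ j)).foldr (· ∘ ·) id)
            (fun z => Complex.exp (Matrix.trace (u * Matrix.of z)) *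
              Complex.exp (s * Complex.log (Matrix.of z).det))) z₀)
        = ∑ σ : Equiv.Perm (Fin m), ((Equiv.Perm.sign σ : ℤ) : ℂ) *
            (Stmt2Aux.Fn u s z₀ * (Q σ).eval s) :=
          Finset.sum_congr rfl fun σ _ => by rw [hsum σ]
      _ = Stmt2Aux.Fn u s z₀ *
            Polynomial.eval s (∑ σ : Equiv.Perm (Fin m),
              Polynomial.C ((Equiv.Perm.sign σ : ℤ) : ℂ) * Q σ) := by
          rw [Polynomial.eval_finset_sum, Finset.mul_sum]
          exact Finset.sum_congr rfl fun σ _ => by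
            rw [Polynomial.eval_mul, Polynomial.eval_C]; ring
      _ = _ := rfl
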